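/- Let L be a finite-dimensional Lie algebra over ℂ carrying a nondegenerate symmetric invariant bilinear form B (invariance: B(⁅a,b⁆,c) = B(a,⁅b,c⁆) for all a,b,c ∈ L). Let x ∈ L be such that ad x is diagonalizable with all eigenvalues in ½ℤ; for j ∈ ½ℤ let g_j denote the eigenspace of ad x with eigenvalue j, so that L = ⊕_{j ∈ ½ℤ} g_j. Let f ∈ g_{−1} and define the bilinear form ⟨·,·⟩ on g_{1/2} by ⟨a,b⟩ = B(f, ⁅a,b⁆). Then ⟨·,·⟩ is nondegenerate on g_{1/2} if and only if ad f restricts to a linear bijection from g_{1/2} onto g_{−1/2}. -/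

import Mathlib

/-- Equivalence of the nondegeneracy of the form `⟨a,b⟩ = B(f,⁅a,b⁆)` on `g_{1/2}`
with condition (1.4): `ad f : g_{1/2} → g_{−1/2}` is a bijection. -/
theorem neutral_form_nondeg_iff
    {L : Type*} [LieRing L] [LieAlgebra ℂ L] [FiniteDimensional ℂ L]
    (B : L →ₗ[ℂ] L →ₗ[ℂ] ℂ)
    (hsymm : ∀ a b, B a b = B b a)
    (hinv : ∀ a b c, B ⁅a, b⁆ c = B a ⁅b, c⁆)
    (hnd : ∀ a, (∀ b, B a b = 0) → a = 0)
    (x : L) (g : ℤ → Submodule ℂ L)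
    (hg : ∀ k : ℤ, g k = Module.End.eigenspace (LieAlgebra.ad ℂ L x) ((k : ℂ) / 2))
    (hdiag : (⨆ k : ℤ, g k) = ⊤)
    (f : L) (hf : f ∈ g (-2)) :
    (∀ a ∈ g 1, (∀ b ∈ g 1, B f ⁅a, b⁆ = 0) → a = 0) ↔
      (Submodule.map (LieAlgebra.ad ℂ L f) (g 1) = g (-1) ∧
        ∀ a ∈ g 1, ⁅f, a⁆ = 0 → a = 0) := by
  -- membership characterization
  have hmem : ∀ (k : ℤ) (a : L), a ∈ g k ↔ ⁅x, a⁆ = (((k : ℂ))/2) • a := by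
    intro k a
    rw [hg k, Module.End.mem_eigenspace_iff]
    rfl
  -- the form pairs only eigenspaces with opposite eigenvalues
  have hpair : ∀ (i j : ℤ), i + j ≠ 0 → ∀ a ∈ g i, ∀ b ∈ g j, B a b = 0 := by
    intro i j hij a ha b hb
    have h1 : B ⁅a, x⁆ b = B a ⁅x, b⁆ := hinv a x b
    rw [(hmem j b).mp hb] at h1
    have h2 : ⁅a, x⁆ = (-(((i : ℂ))/2)) • a := by
      rw [← lie_skew, (hmem i a).mp ha, neg_smul]
    rw [h2] at h1
    simp only [map_smul, LinearMap.smul_apply, smul_eq_mul, LinearMap.neg_apply,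
      map_neg, neg_mul] at h1
    have hij' : ((i : ℂ) + (j : ℂ)) ≠ 0 := by
      have : ((i + j : ℤ) : ℂ) ≠ 0 := Int.cast_ne_zero.mpr hij
      push_cast at this
      exact this
    have hz : ((i : ℂ) + (j : ℂ)) / 2 * B a b = 0 := by linear_combination -h1
    rcases mul_eq_zero.mp hz with h | h
    · exact absurd h (div_ne_zero hij' two_ne_zero)
    · exact h
  -- nondegeneracy of the pairing between g k and g (-k)
  have hnondeg : ∀ (k : ℤ), ∀ a ∈ g k, (∀ b ∈ g (-k), B a b = 0) → a = 0 := by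
    intro k a ha h
    apply hnd
    intro c
    have h2 : (⨆ j : ℤ, g j) ≤ LinearMap.ker (B a) := by
      apply iSup_le
      intro j b hb
      simp only [LinearMap.mem_ker]
      by_cases hj : k + j = 0
      · have hjk : j = -k := by omega
        exact h b (hjk ▸ hb)
      · exact hpair k j hj a ha b hb
    rw [hdiag] at h2
    exact h2 Submodule.mem_top
  -- ad f maps g 1 into g (-1)
  have adf_mem : ∀ a ∈ g 1, ⁅f, a⁆ ∈ g (-1) := by
    intro a ha
    rw [hmem]
    have hxf : ⁅x, f⁆ = (((-2 : ℤ) : ℂ)/2) • f := (hmem _ _).mp hf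
    have hxa : ⁅x, a⁆ = (((1 : ℤ) : ℂ)/2) • a := (hmem _ _).mp ha
    have : ⁅x, ⁅f, a⁆⁆ = ⁅⁅x, f⁆, a⁆ + ⁅f, ⁅x, a⁆⁆ := (leibniz_lie x f a)
    rw [hxf, hxa, smul_lie, lie_smul, ← add_smul] at this
    rw [this]
    norm_num
  -- the dimensions of g 1 and g (-1) coincide
  have hdim : Module.finrank ℂ (g 1) = Module.finrank ℂ (g (-1)) := by
    have inj1 : Function.Injective (B.domRestrict₁₂ (g 1) (g (-1))) := by
      rw [← LinearMap.ker_eq_bot, LinearMap.ker_eq_bot']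
      intro a ha
      ext
      refine hnondeg 1 a.1 a.2 ?_
      intro b hb
      have := congrFun (congrArg DFunLike.coe ha) ⟨b, hb⟩
      simpa [LinearMap.domRestrict₁₂_apply] using this
    have inj2 : Function.Injective (B.domRestrict₁₂ (g (-1)) (g 1)) := by
      rw [← LinearMap.ker_eq_bot, LinearMap.ker_eq_bot']
      intro a ha
      ext
      refine hnondeg (-1) a.1 a.2 ?_
      intro b hb
      have := congrFun (congrArg DFunLike.coe ha) ⟨b, by simpa using hb⟩
      simpa [LinearMap.domRestrict₁₂_apply] using this
    have le1 : Module.finrank ℂ (g 1) ≤ Module.finrank ℂ (g (-1)) := by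
      calc Module.finrank ℂ (g 1)
          ≤ Module.finrank ℂ (Module.Dual ℂ (g (-1))) :=
            LinearMap.finrank_le_finrank_of_injective inj1
        _ = Module.finrank ℂ (g (-1)) := Subspace.dual_finrank_eq
    have le2 : Module.finrank ℂ (g (-1)) ≤ Module.finrank ℂ (g 1) := by
      calc Module.finrank ℂ (g (-1))
          ≤ Module.finrank ℂ (Module.Dual ℂ (g 1)) :=
            LinearMap.finrank_le_finrank_of_injective inj2
        _ = Module.finrank ℂ (g 1) := Subspace.dual_finrank_eq
    omega
  constructor
  · intro hN
    have hinjective : ∀ a ∈ g 1, ⁅f, a⁆ = 0 → a = 0 := by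
      intro a ha hfa
      apply hN a ha
      intro b hb
      rw [← hinv f a b, hfa]
      simp
    refine ⟨?_, hinjective⟩
    -- surjectivity via dimension count
    have hle : Submodule.map (LieAlgebra.ad ℂ L f) (g 1) ≤ g (-1) := by
      rintro _ ⟨a, ha, rfl⟩
      exact adf_mem a ha
    apply Submodule.eq_of_le_of_finrank_le hle
    set φ : (g 1) →ₗ[ℂ] L := (LieAlgebra.ad ℂ L f).comp (g 1).subtype with hφ
    have hrange : LinearMap.range φ = Submodule.map (LieAlgebra.ad ℂ L f) (g 1) := by
      rw [hφ, LinearMap.range_comp, Submodule.range_subtype]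
    have hφinj : Function.Injective φ := by
      rw [← LinearMap.ker_eq_bot, LinearMap.ker_eq_bot']
      intro a ha
      ext
      exact hinjective a.1 a.2 ha
    have := LinearMap.finrank_range_of_inj hφinj
    rw [hrange] at this
    rw [this, ← hdim]
  · rintro ⟨hmap, hinj⟩ a ha hab
    have hfa : ⁅f, a⁆ ∈ g (-1) := adf_mem a ha
    have hzero : ⁅f, a⁆ = 0 := by
      apply hnondeg (-1) _ hfa
      intro b hb
      rw [hinv f a b]
      exact hab b (by simpa using hb)
    exact hinj a ha hzero
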